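/- (Theorem 1 for ISTC, exact support recovery) Under the setting of the ISTC continuation algorithm — Ψ ∈ ℝ^{n×p} with unit-norm columns and mutual coherence μ satisfying μ·s < 1/2; x† ∈ ℝ^p with support A†, |A†| = s ≥ 1; y = Ψ x† + η with ‖η‖₂ ≤ ε > 0; C₁ > 1/(1 − 2μs); α = (1 − 1/C₁)/(μs); γ ∈ [2μs/(1 − 1/C₁), 1); K ≥ 1; λ_ℓ = γ^ℓ λ₀ with ‖x†‖_{ℓ∞} ≤ α γ λ₀; x(λ₀) = 0 and x(λ_ℓ) obtained by K iterations of z ↦ S_{λ_ℓ}(z + Ψᵗ(y − Ψ z)) from x(λ_{ℓ−1}); output x* = x(λ_{ℓ*−1}) where ℓ* is the first index with λ_{ℓ*} < C₁ε — if min_{i ∈ A†} |x†_i| > (C₁ − 1)ε/(μs), then supp(x*) = A†. -/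

import Mathlib

open Finset Matrix

noncomputable def softThresh (lam t : ℝ) : ℝ := Real.sign t * max (|t| - lam) 0

lemma softThresh_eq_zero {lam t : ℝ} (h : |t| ≤ lam) : softThresh lam t = 0 := by
  unfold softThresh
  rw [max_eq_right (by linarith)]
  ring

lemma abs_softThresh_sub_self_le {lam : ℝ} (hlam : 0 ≤ lam) (t : ℝ) :
    |softThresh lam t - t| ≤ lam := by
  unfold softThresh
  rw [abs_le]
  rcases lt_trichotomy t 0 with h | h | h
  · rw [Real.sign_of_neg h, abs_of_neg h]
    rcases max_cases (-t - lam) 0 with ⟨h1, h2⟩ | ⟨h1, h2⟩ <;> rw [h1] <;>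
      constructor <;> linarith
  · subst h
    simp [Real.sign_zero, hlam]
  · rw [Real.sign_of_pos h, abs_of_pos h]
    rcases max_cases (t - lam) 0 with ⟨h1, h2⟩ | ⟨h1, h2⟩ <;> rw [h1] <;>
      constructor <;> linarith

noncomputable def istcF {n p : ℕ} (Ψ : Matrix (Fin n) (Fin p) ℝ) (w : Fin n → ℝ)
    (lam : ℝ) (z : Fin p → ℝ) : Fin p → ℝ :=
  fun i => softThresh lam (z i + Ψ.transpose.mulVec (w - Ψ.mulVec z) i)

lemma istc_step {n p : ℕ} (Ψ : Matrix (Fin n) (Fin p) ℝ)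
    (μ ε lam : ℝ) (s : ℕ)
    (xdag : Fin p → ℝ) (η : Fin n → ℝ) (Adag : Finset (Fin p))
    (hcol : ∀ i, ∑ k, Ψ k i ^ 2 = 1)
    (hcoh : ∀ i j, i ≠ j → |∑ k, Ψ k i * Ψ k j| ≤ μ) (hμ : 0 ≤ μ)
    (hxdag0 : ∀ i, i ∉ Adag → xdag i = 0)
    (hcard : Adag.card = s)
    (hη2 : ∑ k, η k ^ 2 ≤ ε ^ 2) (hε : 0 ≤ ε)
    (hlam : 0 ≤ lam)
    (z : Fin p → ℝ) (e : ℝ) (he : 0 ≤ e)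
    (hze : ∀ i, |z i - xdag i| ≤ e)
    (hzsupp : ∀ i, i ∉ Adag → z i = 0)
    (hsmall : μ * s * e + ε ≤ lam) :
    (∀ i, i ∉ Adag →
      softThresh lam (z i + Ψ.transpose.mulVec ((Ψ.mulVec xdag + η) - Ψ.mulVec z) i) = 0) ∧
    (∀ i, |softThresh lam (z i + Ψ.transpose.mulVec ((Ψ.mulVec xdag + η) - Ψ.mulVec z) i)
        - xdag i| ≤ μ * s * e + ε + lam) := by
  -- the argument of the soft threshold
  set b : Fin p → ℝ :=
    fun i => z i + Ψ.transpose.mulVec ((Ψ.mulVec xdag + η) - Ψ.mulVec z) i with hb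
  have hkey : ∀ i, |b i - xdag i| ≤ μ * s * e + ε := by
    intro i
    have hexp : b i - xdag i =
        (∑ j ∈ univ.erase i, (∑ k, Ψ k i * Ψ k j) * (xdag j - z j)) + ∑ k, Ψ k i * η k := by
      have h1 : Ψ.transpose.mulVec ((Ψ.mulVec xdag + η) - Ψ.mulVec z) i
          = (∑ j, (∑ k, Ψ k i * Ψ k j) * (xdag j - z j)) + ∑ k, Ψ k i * η k := by
        simp only [Matrix.mulVec, Matrix.transpose_apply, dotProduct,
          Pi.add_apply, Pi.sub_apply]
        have per_k : ∀ k, Ψ k i * (∑ j, Ψ k j * xdag j + η k - ∑ j, Ψ k j * z j)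
            = (∑ j, Ψ k i * Ψ k j * (xdag j - z j)) + Ψ k i * η k := by
          intro k
          have hh : ∑ j, Ψ k i * Ψ k j * (xdag j - z j)
              = Ψ k i * ((∑ j, Ψ k j * xdag j) - ∑ j, Ψ k j * z j) := by
            rw [← Finset.sum_sub_distrib, Finset.mul_sum]
            exact Finset.sum_congr rfl fun j _ => by ring
          rw [hh]; ring
        rw [Finset.sum_congr rfl fun k _ => per_k k, Finset.sum_add_distrib]
        congr 1
        rw [Finset.sum_comm]
        exact Finset.sum_congr rfl fun j _ => by rw [Finset.sum_mul]
      rw [hb]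
      simp only []
      rw [h1]
      have h2 : (∑ j, (∑ k, Ψ k i * Ψ k j) * (xdag j - z j))
          = (∑ j ∈ univ.erase i, (∑ k, Ψ k i * Ψ k j) * (xdag j - z j))
            + (xdag i - z i) := by
        rw [← Finset.sum_erase_add univ _ (Finset.mem_univ i)]
        have : (∑ k, Ψ k i * Ψ k i) = 1 := by
          have := hcol i; simpa [sq] using this
        rw [this, one_mul]
      rw [h2]; ring
    rw [hexp]
    have hnoise : |∑ k, Ψ k i * η k| ≤ ε := by
      have hcs := Finset.sum_mul_sq_le_sq_mul_sq univ (fun k => Ψ k i) η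
      have h1 : (∑ k, Ψ k i * η k) ^ 2 ≤ ε ^ 2 := by
        calc (∑ k, Ψ k i * η k) ^ 2 ≤ (∑ k, Ψ k i ^ 2) * (∑ k, η k ^ 2) := hcs
        _ = ∑ k, η k ^ 2 := by rw [hcol i, one_mul]
        _ ≤ ε ^ 2 := hη2
      calc |∑ k, Ψ k i * η k| = Real.sqrt ((∑ k, Ψ k i * η k) ^ 2) :=
            (Real.sqrt_sq_eq_abs _).symm
      _ ≤ Real.sqrt (ε ^ 2) := Real.sqrt_le_sqrt h1
      _ = ε := by rw [Real.sqrt_sq hε]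
    have hmain : |∑ j ∈ univ.erase i, (∑ k, Ψ k i * Ψ k j) * (xdag j - z j)| ≤ μ * s * e := by
      calc |∑ j ∈ univ.erase i, (∑ k, Ψ k i * Ψ k j) * (xdag j - z j)|
          ≤ ∑ j ∈ univ.erase i, |(∑ k, Ψ k i * Ψ k j) * (xdag j - z j)| :=
            Finset.abs_sum_le_sum_abs _ _
      _ ≤ ∑ j ∈ univ.erase i, (if j ∈ Adag then μ * e else 0) := by
          apply Finset.sum_le_sum
          intro j hj
          have hji : j ≠ i := (Finset.mem_erase.mp hj).1
          by_cases hjA : j ∈ Adag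
          · simp only [hjA, if_true]
            rw [abs_mul]
            apply mul_le_mul (hcoh i j (Ne.symm hji)) _ (abs_nonneg _) hμ
            calc |xdag j - z j| = |z j - xdag j| := abs_sub_comm _ _
            _ ≤ e := hze j
          · simp only [hjA, if_false]
            rw [hxdag0 j hjA, hzsupp j hjA]
            simp
      _ = ∑ j ∈ (univ.erase i).filter (· ∈ Adag), (μ * e) := by
          rw [Finset.sum_filter]
      _ = ((univ.erase i).filter (· ∈ Adag)).card * (μ * e) := by
          rw [Finset.sum_const, nsmul_eq_mul]
      _ ≤ s * (μ * e) := by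
          apply mul_le_mul_of_nonneg_right _ (by positivity)
          have hcsub : ((univ.erase i).filter (· ∈ Adag)).card ≤ s := by
            rw [← hcard]
            exact Finset.card_le_card fun j hj => (Finset.mem_filter.mp hj).2
          exact_mod_cast hcsub
      _ = μ * s * e := by ring
    calc |(∑ j ∈ univ.erase i, (∑ k, Ψ k i * Ψ k j) * (xdag j - z j)) + ∑ k, Ψ k i * η k|
        ≤ |∑ j ∈ univ.erase i, (∑ k, Ψ k i * Ψ k j) * (xdag j - z j)| + |∑ k, Ψ k i * η k| :=
          abs_add_le _ _
    _ ≤ μ * s * e + ε := add_le_add hmain hnoise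
  constructor
  · intro i hi
    apply softThresh_eq_zero
    have := hkey i
    rw [hxdag0 i hi] at this
    simp only [sub_zero] at this
    linarith
  · intro i
    calc |softThresh lam (b i) - xdag i|
        ≤ |softThresh lam (b i) - b i| + |b i - xdag i| := abs_sub_le _ _ _
    _ ≤ lam + (μ * s * e + ε) := add_le_add (abs_softThresh_sub_self_le hlam _) (hkey i)
    _ = μ * s * e + ε + lam := by ring

lemma istc_step' {n p : ℕ} (Ψ : Matrix (Fin n) (Fin p) ℝ)
    (μ ε lam : ℝ) (s : ℕ)
    (xdag : Fin p → ℝ) (η : Fin n → ℝ) (Adag : Finset (Fin p))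
    (hcol : ∀ i, ∑ k, Ψ k i ^ 2 = 1)
    (hcoh : ∀ i j, i ≠ j → |∑ k, Ψ k i * Ψ k j| ≤ μ) (hμ : 0 ≤ μ)
    (hxdag0 : ∀ i, i ∉ Adag → xdag i = 0)
    (hcard : Adag.card = s)
    (hη2 : ∑ k, η k ^ 2 ≤ ε ^ 2) (hε : 0 ≤ ε)
    (hlam : 0 ≤ lam)
    (z : Fin p → ℝ) (e : ℝ) (he : 0 ≤ e)
    (hze : ∀ i, |z i - xdag i| ≤ e)
    (hzsupp : ∀ i, i ∉ Adag → z i = 0)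
    (hsmall : μ * s * e + ε ≤ lam) :
    (∀ i, i ∉ Adag → istcF Ψ (Ψ.mulVec xdag + η) lam z i = 0) ∧
    (∀ i, |istcF Ψ (Ψ.mulVec xdag + η) lam z i - xdag i| ≤ μ * s * e + ε + lam) :=
  istc_step Ψ μ ε lam s xdag η Adag hcol hcoh hμ hxdag0 hcard hη2 hε hlam z e he
    hze hzsupp hsmall

theorem istc_exact_support_recovery {n p : ℕ} (Ψ : Matrix (Fin n) (Fin p) ℝ)
    (μ ε C₁ α γ lam₀ : ℝ) (s K : ℕ)
    (xdag : Fin p → ℝ) (η y : Fin n → ℝ) (Adag : Finset (Fin p))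
    (hcol : ∀ i, ∑ k, Ψ k i ^ 2 = 1)
    (hcoh : ∀ i j, i ≠ j → |∑ k, Ψ k i * Ψ k j| ≤ μ) (hμpos : 0 < μ)
    (hsuppdag : Function.support xdag = (Adag : Set (Fin p)))
    (hcard : Adag.card = s) (hs : 1 ≤ s) (hμs : μ * s < 1 / 2)
    (hy : y = Ψ.mulVec xdag + η)
    (hη : Real.sqrt (∑ k, η k ^ 2) ≤ ε) (hε : 0 < ε)
    (hC : 1 / (1 - 2 * μ * s) < C₁)
    (hα : α = (1 - 1 / C₁) / (μ * s))
    (hγ : γ ∈ Set.Ico (2 * μ * s / (1 - 1 / C₁)) 1)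
    (hK : 1 ≤ K)
    (xseq : ℕ → Fin p → ℝ)
    (hx0 : xseq 0 = 0)
    (hxstep : ∀ ℓ : ℕ, xseq (ℓ + 1) =
      (fun z : Fin p → ℝ => fun i =>
          softThresh (γ ^ (ℓ + 1) * lam₀)
            (z i + Ψ.transpose.mulVec (y - Ψ.mulVec z) i))^[K] (xseq ℓ))
    (hlam₀ : ‖xdag‖ ≤ α * γ * lam₀)
    (lstar : ℕ) (hlstar_pos : 1 ≤ lstar)
    (hlstar : γ ^ lstar * lam₀ < C₁ * ε)
    (hlstar_first : ∀ m < lstar, C₁ * ε ≤ γ ^ m * lam₀)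
    (hmin : ∀ i ∈ Adag, (C₁ - 1) * ε / (μ * s) < |xdag i|) :
    Function.support (xseq (lstar - 1)) = (Adag : Set (Fin p)) := by
  subst hy
  obtain ⟨hγ1, hγ2⟩ := hγ
  -- basic facts about the constants
  have hs1 : (1:ℝ) ≤ (s:ℝ) := by exact_mod_cast hs
  have hμs0 : 0 < μ * s := by positivity
  have hden : 0 < 1 - 2 * μ * s := by linarith
  have hC1 : 1 < C₁ := lt_trans (one_lt_one_div hden (by linarith)) hC
  have hC0 : 0 < C₁ := by linarith
  have hinvC : 1 / C₁ < 1 - 2 * μ * s := by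
    rw [div_lt_iff₀ hC0]
    have h1 := (div_lt_iff₀ hden).mp hC
    nlinarith
  have hc2μs : 2 * μ * s < 1 - 1 / C₁ := by linarith
  have hc0 : 0 < 1 - 1 / C₁ := by linarith
  have hα0 : 0 < α := by rw [hα]; positivity
  have hαval : α * (μ * s) = 1 - 1 / C₁ := by
    rw [hα]; field_simp
  have hγ0 : 0 < γ := lt_of_lt_of_le (div_pos (by linarith) hc0) hγ1
  have hαγ : 2 ≤ α * γ := by
    have h1 : α * (2 * μ * s / (1 - 1 / C₁)) ≤ α * γ :=
      mul_le_mul_of_nonneg_left hγ1 hα0.le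
    have h2 : α * (2 * μ * s / (1 - 1 / C₁)) = 2 := by
      have h3 : α * (2 * μ * s / (1 - 1 / C₁)) = 2 * (α * (μ * s)) / (1 - 1 / C₁) := by
        ring
      rw [h3, hαval, mul_div_assoc, div_self hc0.ne', mul_one]
    linarith
  have hη2 : ∑ k, η k ^ 2 ≤ ε ^ 2 := by
    have h0 : 0 ≤ ∑ k, η k ^ 2 := Finset.sum_nonneg fun k _ => sq_nonneg _
    calc ∑ k, η k ^ 2 = Real.sqrt (∑ k, η k ^ 2) ^ 2 := (Real.sq_sqrt h0).symm
    _ ≤ ε ^ 2 := pow_le_pow_left₀ (Real.sqrt_nonneg _) hη 2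
  have hlam₀pos : 0 < lam₀ := by
    have h1 := hlstar_first 0 hlstar_pos
    rw [pow_zero, one_mul] at h1
    nlinarith
  have hxdag0 : ∀ i, i ∉ Adag → xdag i = 0 := by
    intro i hi
    by_contra h
    exact hi (by
      have h2 : i ∈ Function.support xdag := h
      rw [hsuppdag] at h2
      exact_mod_cast h2)
  have hxbd : ∀ i, |xdag i| ≤ α * γ * lam₀ := fun i =>
    le_trans (by rw [← Real.norm_eq_abs]; exact norm_le_pi_norm xdag i) hlam₀
  have hCinv : 1 / C₁ * C₁ = 1 := by field_simp
  -- main invariant along the continuation path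
  have main : ∀ ℓ, ℓ ≤ lstar - 1 →
      (∀ i, i ∉ Adag → xseq ℓ i = 0) ∧
      (∀ i, |xseq ℓ i - xdag i| ≤ α * γ ^ (ℓ + 1) * lam₀) := by
    intro ℓ
    induction ℓ with
    | zero =>
      intro _
      refine ⟨fun i _ => by rw [hx0]; rfl, fun i => ?_⟩
      rw [hx0]
      simp only [Pi.zero_apply, zero_sub, abs_neg]
      calc |xdag i| ≤ α * γ * lam₀ := hxbd i
      _ = α * γ ^ (0 + 1) * lam₀ := by ring
    | succ m ih =>
      intro hm
      obtain ⟨ih1, ih2⟩ := ih (by omega)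
      have hlampos : 0 < γ ^ (m + 1) * lam₀ := by positivity
      have hlamge : C₁ * ε ≤ γ ^ (m + 1) * lam₀ := hlstar_first (m + 1) (by omega)
      have hεlam : ε ≤ 1 / C₁ * (γ ^ (m + 1) * lam₀) := by
        nlinarith [one_div_pos.mpr hC0]
      have he0 : 0 ≤ α * (γ ^ (m + 1) * lam₀) := by positivity
      have hsmall : μ * s * (α * (γ ^ (m + 1) * lam₀)) + ε ≤ γ ^ (m + 1) * lam₀ := by
        have h1 : μ * s * (α * (γ ^ (m + 1) * lam₀))
            = (1 - 1 / C₁) * (γ ^ (m + 1) * lam₀) := by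
          rw [← hαval]; ring
        rw [h1]; linarith
      have himpr : μ * s * (α * (γ ^ (m + 1) * lam₀)) + ε + γ ^ (m + 1) * lam₀
          ≤ α * (γ ^ (m + 2) * lam₀) := by
        have h1 : μ * s * (α * (γ ^ (m + 1) * lam₀))
            = (1 - 1 / C₁) * (γ ^ (m + 1) * lam₀) := by
          rw [← hαval]; ring
        have h2 : 2 * (γ ^ (m + 1) * lam₀) ≤ α * γ * (γ ^ (m + 1) * lam₀) :=
          mul_le_mul_of_nonneg_right hαγ hlampos.le
        have h3 : α * γ * (γ ^ (m + 1) * lam₀) = α * (γ ^ (m + 2) * lam₀) := by ring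
        rw [h1]; linarith
      have himpr2 : α * (γ ^ (m + 2) * lam₀) ≤ α * (γ ^ (m + 1) * lam₀) := by
        apply mul_le_mul_of_nonneg_left _ hα0.le
        have h4 : γ ^ (m + 2) ≤ γ ^ (m + 1) :=
          pow_le_pow_of_le_one hγ0.le hγ2.le (by omega)
        exact mul_le_mul_of_nonneg_right h4 hlam₀pos.le
      -- rewrite the update map as istcF
      have hfun : (fun z : Fin p → ℝ => fun i =>
            softThresh (γ ^ (m + 1) * lam₀)
              (z i + Ψ.transpose.mulVec (Ψ.mulVec xdag + η - Ψ.mulVec z) i))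
          = istcF Ψ (Ψ.mulVec xdag + η) (γ ^ (m + 1) * lam₀) := rfl
      have hstepm : xseq (m + 1)
          = (istcF Ψ (Ψ.mulVec xdag + η) (γ ^ (m + 1) * lam₀))^[K] (xseq m) := by
        rw [hxstep m, hfun]
      -- inner loop invariant
      have inner : ∀ k,
          (∀ i, i ∉ Adag →
            ((istcF Ψ (Ψ.mulVec xdag + η) (γ ^ (m + 1) * lam₀))^[k] (xseq m)) i = 0) ∧
          (∀ i, |((istcF Ψ (Ψ.mulVec xdag + η) (γ ^ (m + 1) * lam₀))^[k] (xseq m)) i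
              - xdag i| ≤ α * (γ ^ (m + 1) * lam₀)) := by
        intro k
        induction k with
        | zero =>
          simp only [Function.iterate_zero, id_eq]
          refine ⟨ih1, fun i => ?_⟩
          calc |xseq m i - xdag i| ≤ α * γ ^ (m + 1) * lam₀ := ih2 i
          _ = α * (γ ^ (m + 1) * lam₀) := by ring
        | succ k ihk =>
          obtain ⟨hk1, hk2⟩ := ihk
          have hstep := istc_step' Ψ μ ε (γ ^ (m + 1) * lam₀) s xdag η Adag hcol hcoh
            hμpos.le hxdag0 hcard hη2 hε.le hlampos.le _ (α * (γ ^ (m + 1) * lam₀))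
            he0 hk2 hk1 hsmall
          rw [Function.iterate_succ_apply']
          exact ⟨hstep.1, fun i => le_trans (hstep.2 i) (le_trans himpr himpr2)⟩
      -- conclude at level m+1 using the last inner step
      obtain ⟨K', rfl⟩ : ∃ K', K = K' + 1 := ⟨K - 1, (Nat.succ_pred_eq_of_pos hK).symm⟩
      obtain ⟨hk1, hk2⟩ := inner K'
      have hstep := istc_step' Ψ μ ε (γ ^ (m + 1) * lam₀) s xdag η Adag hcol hcoh
        hμpos.le hxdag0 hcard hη2 hε.le hlampos.le _ (α * (γ ^ (m + 1) * lam₀))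
        he0 hk2 hk1 hsmall
      rw [hstepm, Function.iterate_succ_apply']
      refine ⟨hstep.1, fun i => ?_⟩
      calc |_| ≤ μ * s * (α * (γ ^ (m + 1) * lam₀)) + ε + γ ^ (m + 1) * lam₀ := hstep.2 i
      _ ≤ α * (γ ^ (m + 2) * lam₀) := himpr
      _ = α * γ ^ (m + 1 + 1) * lam₀ := by ring
  obtain ⟨hsupp, herr⟩ := main (lstar - 1) le_rfl
  have hlfix : lstar - 1 + 1 = lstar := Nat.succ_pred_eq_of_pos hlstar_pos
  rw [hlfix] at herr
  have hfin : α * γ ^ lstar * lam₀ < (C₁ - 1) * ε / (μ * s) := by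
    have h1 : α * (γ ^ lstar * lam₀) < α * (C₁ * ε) :=
      mul_lt_mul_of_pos_left hlstar hα0
    have h2 : α * (C₁ * ε) = (C₁ - 1) * ε / (μ * s) := by
      rw [hα]; field_simp
    calc α * γ ^ lstar * lam₀ = α * (γ ^ lstar * lam₀) := by ring
    _ < α * (C₁ * ε) := h1
    _ = _ := h2
  ext i
  simp only [Function.mem_support, Finset.mem_coe]
  constructor
  · intro hne
    by_contra hi
    exact hne (hsupp i hi)
  · intro hi hzero
    have h1 := herr i
    rw [hzero] at h1
    rw [zero_sub, abs_neg] at h1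
    have h2 := hmin i hi
    linarith
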